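/- Let n ≥ 2. Let Z₁ ⊆ S^{n−1} be a countable set and let Z₂ ⊆ S^{n−1} be closed and nowhere dense in S^{n−1}. Then the set {R ∈ SO(n) : R(Z₁) ∩ Z₂ = ∅} is a dense G_δ subset of SO(n) (in particular it is comeager). -/

import Mathlib

open Set Topology

noncomputable section

/-- `SO(n)` as a subset of the `n × n` real matrices: orthogonal matrices of
determinant `1`, with the subspace topology. -/
def SOSet (n : ℕ) : Set (Matrix (Fin n) (Fin n) ℝ) :=
  {A | A ∈ Matrix.orthogonalGroup (Fin n) ℝ ∧ A.det = 1}

/-- The natural action of a matrix on `EuclideanSpace ℝ (Fin n)`. -/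
def matAct {n : ℕ} (A : Matrix (Fin n) (Fin n) ℝ) (z : EuclideanSpace ℝ (Fin n)) :
    EuclideanSpace ℝ (Fin n) :=
  (EuclideanSpace.equiv (Fin n) ℝ).symm (A.mulVec (EuclideanSpace.equiv (Fin n) ℝ z))

namespace Stmt7Aux

open Matrix

variable {n : ℕ}

/-- Householder-type reflection (as a matrix). -/
def house (u : Fin n → ℝ) : Matrix (Fin n) (Fin n) ℝ :=
  1 - (2 / (u ⬝ᵥ u)) • vecMulVec u u

lemma vecMulVec_mulVec' (u v x : Fin n → ℝ) : vecMulVec u v *ᵥ x = (v ⬝ᵥ x) • u := by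
  ext i
  simp only [Matrix.mulVec, dotProduct, vecMulVec_apply, Pi.smul_apply, smul_eq_mul,
    Finset.mul_sum]
  rw [Finset.sum_mul]
  exact Finset.sum_congr rfl fun j _ => by ring

lemma house_mulVec (u x : Fin n → ℝ) :
    house u *ᵥ x = x - (2 / (u ⬝ᵥ u) * (u ⬝ᵥ x)) • u := by
  rw [house, sub_mulVec, smul_mulVec, vecMulVec_mulVec', one_mulVec, smul_smul]

lemma vecMulVec_mul_self (u : Fin n → ℝ) :
    vecMulVec u u * vecMulVec u u = (u ⬝ᵥ u) • vecMulVec u u := by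
  ext i j
  simp only [Matrix.mul_apply, vecMulVec_apply, Matrix.smul_apply, smul_eq_mul,
    dotProduct, Finset.sum_mul]
  exact Finset.sum_congr rfl fun k _ => by ring

lemma house_mul_self (u : Fin n → ℝ) (hu : u ⬝ᵥ u ≠ 0) : house u * house u = 1 := by
  have h2 : 2 / (u ⬝ᵥ u) * (2 / (u ⬝ᵥ u) * (u ⬝ᵥ u)) = 2 / (u ⬝ᵥ u) + 2 / (u ⬝ᵥ u) := by
    field_simp
    ring
  simp only [house, mul_sub, sub_mul, mul_one, one_mul,
    Matrix.smul_mul, Matrix.mul_smul, vecMulVec_mul_self, smul_smul, h2, add_smul]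
  abel

lemma house_transpose (u : Fin n → ℝ) : (house u)ᵀ = house u := by
  ext i j
  simp only [house, Matrix.transpose_apply, Matrix.sub_apply, Matrix.smul_apply,
    vecMulVec_apply, Matrix.one_apply, smul_eq_mul]
  rcases eq_or_ne i j with h | h
  · subst h; ring
  · rw [if_neg (Ne.symm h), if_neg h]; ring

lemma house_mem_orthogonal (u : Fin n → ℝ) (hu : u ⬝ᵥ u ≠ 0) :
    house u ∈ Matrix.orthogonalGroup (Fin n) ℝ := by
  rw [Matrix.mem_orthogonalGroup_iff]
  have : star (house u) = house u := (house_transpose u : (house u)ᵀ = house u)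
  rw [house_transpose]
  exact house_mul_self u hu

lemma house_det (u : Fin n → ℝ) (hu : u ⬝ᵥ u ≠ 0) : (house u).det = -1 := by
  have : house u = 1 + Matrix.replicateCol Unit ((-(2 / (u ⬝ᵥ u))) • u) * Matrix.replicateRow Unit u := by
    rw [house, Matrix.replicateCol_smul, Matrix.smul_mul, ← vecMulVec_eq Unit, neg_smul, ← sub_eq_add_neg]
  rw [this, Matrix.det_one_add_replicateCol_mul_replicateRow, dotProduct_smul]
  rw [smul_eq_mul]
  field_simp
  ring

lemma house_two_smul (u : Fin n → ℝ) : house ((2 : ℝ) • u) = house u := by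
  ext i j
  simp only [house, Matrix.sub_apply, Matrix.smul_apply, vecMulVec_apply, Pi.smul_apply,
    smul_eq_mul, smul_dotProduct, dotProduct_smul]
  rcases eq_or_ne (u ⬝ᵥ u) 0 with h | h
  · simp [h]
  · congr 1
    field_simp

lemma orth_mulVec_dotProduct {A : Matrix (Fin n) (Fin n) ℝ}
    (hA : A ∈ Matrix.orthogonalGroup (Fin n) ℝ) (x y : Fin n → ℝ) :
    (A *ᵥ x) ⬝ᵥ (A *ᵥ y) = x ⬝ᵥ y := by
  have h1 : Aᵀ * A = 1 := by
    have := (Matrix.mem_orthogonalGroup_iff' (Fin n) ℝ).1 hA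
    exact this
  calc (A *ᵥ x) ⬝ᵥ (A *ᵥ y) = ((x ᵥ* Aᵀ) ᵥ* A) ⬝ᵥ y := by
        rw [Matrix.dotProduct_mulVec, Matrix.vecMul_transpose]
    _ = x ⬝ᵥ y := by rw [Matrix.vecMul_vecMul, h1, Matrix.vecMul_one]

/-- The coordinates of a unit vector have unit dot product with themselves. -/
lemma dot_self_of_sphere (y : EuclideanSpace ℝ (Fin n)) (hy : ‖y‖ = 1) :
    (EuclideanSpace.equiv (Fin n) ℝ y) ⬝ᵥ (EuclideanSpace.equiv (Fin n) ℝ y) = 1 := by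
  have h : (EuclideanSpace.equiv (Fin n) ℝ y) ⬝ᵥ (EuclideanSpace.equiv (Fin n) ℝ y)
      = ∑ i, ‖y i‖ ^ 2 := by
    simp only [dotProduct]
    exact Finset.sum_congr rfl fun i _ => by
      simp [Real.norm_eq_abs, sq_abs, sq]
  rw [h]
  have := EuclideanSpace.norm_eq y
  rw [hy] at this
  have h2 : (0 : ℝ) ≤ ∑ i, ‖y i‖ ^ 2 := Finset.sum_nonneg fun i _ => sq_nonneg _
  nlinarith [Real.sq_sqrt h2, Real.sqrt_nonneg (∑ i, ‖y i‖ ^ 2)]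

/-- Norm from dot product. -/
lemma norm_eq_one_of_dot (y : EuclideanSpace ℝ (Fin n))
    (hy : (EuclideanSpace.equiv (Fin n) ℝ y) ⬝ᵥ (EuclideanSpace.equiv (Fin n) ℝ y) = 1) :
    ‖y‖ = 1 := by
  have h : (EuclideanSpace.equiv (Fin n) ℝ y) ⬝ᵥ (EuclideanSpace.equiv (Fin n) ℝ y)
      = ∑ i, ‖y i‖ ^ 2 := by
    simp only [dotProduct]
    exact Finset.sum_congr rfl fun i _ => by
      simp [Real.norm_eq_abs, sq_abs, sq]
  rw [h] at hy
  rw [EuclideanSpace.norm_eq, hy, Real.sqrt_one]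


lemma isOpen_good {n : ℕ} (Z₂ : Set (Metric.sphere (0 : EuclideanSpace ℝ (Fin n)) 1))
    (hZ₂closed : IsClosed Z₂) (z : Metric.sphere (0 : EuclideanSpace ℝ (Fin n)) 1) :
    IsOpen {R : SOSet n | matAct R.val z.val ∉ (Subtype.val '' Z₂)} := by
  have hK : IsClosed (Subtype.val '' Z₂) :=
    (hZ₂closed.isCompact.image continuous_subtype_val).isClosed
  have hentry : ∀ i j, Continuous fun A : Matrix (Fin n) (Fin n) ℝ => A i j :=
    fun i j => (continuous_apply j).comp (continuous_apply i)
  have hmv : Continuous fun A : Matrix (Fin n) (Fin n) ℝ =>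
      A *ᵥ (EuclideanSpace.equiv (Fin n) ℝ z.val) := by
    apply continuous_pi
    intro i
    simp only [Matrix.mulVec, dotProduct]
    exact continuous_finset_sum _ fun j _ => (hentry i j).mul continuous_const
  have hcont : Continuous fun R : SOSet n => matAct R.val z.val :=
    ((EuclideanSpace.equiv (Fin n) ℝ).symm.continuous.comp hmv).comp continuous_subtype_val
  exact hK.isOpen_compl.preimage hcont

lemma dense_good {n : ℕ} (Z₂ : Set (Metric.sphere (0 : EuclideanSpace ℝ (Fin n)) 1))
    (hZ₂closed : IsClosed Z₂) (hZ₂nd : IsNowhereDense Z₂)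
    (z : Metric.sphere (0 : EuclideanSpace ℝ (Fin n)) 1) :
    Dense {R : SOSet n | matAct R.val z.val ∉ (Subtype.val '' Z₂)} := by
  rw [dense_iff_inter_open]
  rintro U hU ⟨R₀, hR₀U⟩
  obtain ⟨V, hV, hUV⟩ := isOpen_induced_iff.1 hU
  have hR₀V : (R₀ : Matrix (Fin n) (Fin n) ℝ) ∈ V := by
    rw [← hUV] at hR₀U; exact hR₀U
  set eqv := EuclideanSpace.equiv (Fin n) ℝ with heqv
  set z' : Fin n → ℝ := eqv z.val with hz'
  have hz'dot : z' ⬝ᵥ z' = 1 := dot_self_of_sphere z.val (mem_sphere_zero_iff_norm.1 z.2)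
  set v : EuclideanSpace ℝ (Fin n) := matAct R₀.val z.val with hvdef
  set v' : Fin n → ℝ := eqv v with hv'
  have hveq : v' = R₀.val *ᵥ z' := by
    rw [hv', hvdef, matAct, ← heqv, ← hz']
    exact eqv.apply_symm_apply _
  have hv'dot : v' ⬝ᵥ v' = 1 := by
    rw [hveq, orth_mulVec_dotProduct R₀.2.1]; exact hz'dot
  have hvnorm : v ∈ Metric.sphere (0 : EuclideanSpace ℝ (Fin n)) 1 :=
    mem_sphere_zero_iff_norm.2 (norm_eq_one_of_dot v hv'dot)
  -- the family of rotations
  set g : EuclideanSpace ℝ (Fin n) → Matrix (Fin n) (Fin n) ℝ :=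
    fun w => house (v' + eqv w) * house v' * R₀.val with hg
  have hvv : v' + eqv v = (2 : ℝ) • v' := by rw [← hv', two_smul]
  have hg_at_v : g v = R₀.val := by
    rw [hg]
    simp only
    rw [hvv, house_two_smul, house_mul_self v' (by rw [hv'dot]; norm_num), one_mul]
  -- continuity of `g` at `v`
  have hc : Continuous fun w : EuclideanSpace ℝ (Fin n) => v' + eqv w :=
    continuous_const.add eqv.continuous
  have hd : Continuous fun w : EuclideanSpace ℝ (Fin n) => (v' + eqv w) ⬝ᵥ (v' + eqv w) := by
    simp only [dotProduct]
    exact continuous_finset_sum _ fun i _ =>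
      ((continuous_apply i).comp hc).mul ((continuous_apply i).comp hc)
  have hd4 : (v' + eqv v) ⬝ᵥ (v' + eqv v) = 4 := by
    rw [hvv, smul_dotProduct, dotProduct_smul, hv'dot]
    norm_num
  have hM : Continuous fun w : EuclideanSpace ℝ (Fin n) => vecMulVec (v' + eqv w) (v' + eqv w) :=
    continuous_matrix fun i j =>
      ((continuous_apply i).comp hc).mul ((continuous_apply j).comp hc)
  have hhouse : ContinuousAt (fun w : EuclideanSpace ℝ (Fin n) => house (v' + eqv w)) v := by
    have hscal : ContinuousAt (fun w : EuclideanSpace ℝ (Fin n)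
        => 2 / ((v' + eqv w) ⬝ᵥ (v' + eqv w))) v :=
      continuousAt_const.div hd.continuousAt (by rw [hd4]; norm_num)
    exact continuousAt_const.sub (hscal.smul hM.continuousAt)
  have hcontg : ContinuousAt g v := (hhouse.mul continuousAt_const).mul continuousAt_const
  -- neighborhood of `v` inside which we look for a good point of the sphere
  have hN : (g ⁻¹' V ∩ {w : EuclideanSpace ℝ (Fin n) |
      (v' + eqv w) ⬝ᵥ (v' + eqv w) ≠ 0}) ∈ 𝓝 v := by
    refine Filter.inter_mem (hcontg.preimage_mem_nhds (hV.mem_nhds (by rwa [hg_at_v]))) ?_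
    have : {w : EuclideanSpace ℝ (Fin n) | (v' + eqv w) ⬝ᵥ (v' + eqv w) ≠ 0}
        = (fun w => (v' + eqv w) ⬝ᵥ (v' + eqv w)) ⁻¹' ({0}ᶜ) := rfl
    rw [this]
    exact hd.continuousAt.preimage_mem_nhds
      (isOpen_compl_singleton.mem_nhds (by rw [hd4]; norm_num))
  -- use nowhere density to find a good sphere point near `v`
  have hint : interior Z₂ = ∅ := by rw [← hZ₂closed.closure_eq]; exact hZ₂nd
  have hdense : Dense Z₂ᶜ := interior_eq_empty_iff_dense_compl.1 hint
  have hvcl : (⟨v, hvnorm⟩ : Metric.sphere (0 : EuclideanSpace ℝ (Fin n)) 1) ∈ closure Z₂ᶜ :=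
    hdense _
  obtain ⟨w, hwN, hwZ⟩ := mem_closure_iff_nhds.1 hvcl _
    (continuous_subtype_val.continuousAt.preimage_mem_nhds hN)
  obtain ⟨hwV, hu⟩ := hwN
  set w' : Fin n → ℝ := eqv w.val with hw'
  set u : Fin n → ℝ := v' + w' with hudef
  have hu : u ⬝ᵥ u ≠ 0 := hu
  have hw'dot : w' ⬝ᵥ w' = 1 := dot_self_of_sphere w.val (mem_sphere_zero_iff_norm.1 w.2)
  set R₁ : Matrix (Fin n) (Fin n) ℝ := g w.val with hR₁
  have hR₁V : R₁ ∈ V := hwV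
  have hR₁g : R₁ = house u * house v' * R₀.val := rfl
  have hR₁orth : R₁ ∈ Matrix.orthogonalGroup (Fin n) ℝ := by
    rw [hR₁g]
    exact mul_mem (mul_mem (house_mem_orthogonal u hu)
      (house_mem_orthogonal v' (by rw [hv'dot]; norm_num))) R₀.2.1
  have hR₁det : R₁.det = 1 := by
    rw [hR₁g, Matrix.det_mul, Matrix.det_mul, house_det u hu,
      house_det v' (by rw [hv'dot]; norm_num), R₀.2.2]
    norm_num
  -- compute the action of `R₁` on `z`
  have h1 : house v' *ᵥ v' = -v' := by
    rw [house_mulVec, hv'dot]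
    norm_num
    rw [two_smul]
    abel
  have hkey : 2 * (u ⬝ᵥ v') = u ⬝ᵥ u := by
    rw [hudef, add_dotProduct, add_dotProduct, dotProduct_add, dotProduct_add,
      hv'dot, hw'dot, dotProduct_comm w' v']
    ring
  have h2 : house u *ᵥ (-v') = w' := by
    rw [Matrix.mulVec_neg, house_mulVec]
    have hcoef : 2 / (u ⬝ᵥ u) * (u ⬝ᵥ v') = 1 := by
      field_simp
      linarith [hkey]
    rw [hcoef, one_smul, hudef]
    abel
  have hstep : R₁ *ᵥ z' = w' := by
    rw [hR₁g, ← Matrix.mulVec_mulVec, ← Matrix.mulVec_mulVec, ← hveq, h1, h2]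
  have hact : matAct R₁ z.val = w.val := by
    rw [matAct, ← heqv, ← hz', hstep, hw']
    exact eqv.symm_apply_apply _
  have hnotin : matAct R₁ z.val ∉ (Subtype.val '' Z₂) := by
    rw [hact]
    rintro ⟨y, hy, hyw⟩
    exact hwZ (Subtype.ext hyw ▸ hy)
  exact ⟨⟨R₁, hR₁orth, hR₁det⟩, by rw [← hUV]; exact hR₁V, hnotin⟩

end Stmt7Aux

theorem stmt7 (n : ℕ) (hn : 2 ≤ n)
    (Z₁ Z₂ : Set (Metric.sphere (0 : EuclideanSpace ℝ (Fin n)) 1))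
    (hZ₁ : Z₁.Countable) (hZ₂closed : IsClosed Z₂) (hZ₂nd : IsNowhereDense Z₂) :
    IsGδ {R : SOSet n | ∀ z ∈ Z₁, matAct R.val z.val ∉ (Subtype.val '' Z₂)} ∧
    Dense {R : SOSet n | ∀ z ∈ Z₁, matAct R.val z.val ∉ (Subtype.val '' Z₂)} := by
  classical
  haveI : BaireSpace (SOSet n) := by
    letI : PseudoEMetricSpace (Matrix (Fin n) (Fin n) ℝ) :=
      { (inferInstance : PseudoEMetricSpace (Fin n → Fin n → ℝ)) with }
    have hclosed : IsClosed (SOSet n) := by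
      have h1 : IsClosed {A : Matrix (Fin n) (Fin n) ℝ | A * star A = 1} :=
        isClosed_eq (continuous_id.mul continuous_star) continuous_const
      have h2 : IsClosed {A : Matrix (Fin n) (Fin n) ℝ | A.det = 1} :=
        isClosed_eq continuous_id.matrix_det continuous_const
      have hSO : SOSet n = {A : Matrix (Fin n) (Fin n) ℝ | A * star A = 1}
          ∩ {A : Matrix (Fin n) (Fin n) ℝ | A.det = 1} := by
        ext A
        simp [SOSet, Matrix.mem_orthogonalGroup_iff, Matrix.star_eq_conjTranspose]
      rw [hSO]
      exact h1.inter h2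
    haveI : CompleteSpace (SOSet n) := hclosed.completeSpace_coe
    haveI : TopologicalSpace.IsCompletelyPseudoMetrizableSpace (Matrix (Fin n) (Fin n) ℝ) :=
      (inferInstance : TopologicalSpace.IsCompletelyPseudoMetrizableSpace (Fin n → Fin n → ℝ))
    haveI := hclosed.isCompletelyPseudoMetrizableSpace
    exact BaireSpace.of_completelyPseudoMetrizable
  have hset : {R : SOSet n | ∀ z ∈ Z₁, matAct R.val z.val ∉ (Subtype.val '' Z₂)}
      = ⋂ z ∈ Z₁, {R : SOSet n | matAct R.val z.val ∉ (Subtype.val '' Z₂)} := by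
    ext R
    simp
  rw [hset]
  exact ⟨IsGδ.biInter hZ₁ fun z hz => (Stmt7Aux.isOpen_good Z₂ hZ₂closed z).isGδ,
    dense_biInter_of_isOpen (fun z _ => Stmt7Aux.isOpen_good Z₂ hZ₂closed z) hZ₁
      (fun z _ => Stmt7Aux.dense_good Z₂ hZ₂closed hZ₂nd z)⟩
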